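/- Assume λ ≤ 0 and let φ be a solution of EQ_{λ,n,q} on (0,∞) that is not identically zero. If t₀ ∈ (0,∞) is a local minimum point of φ, then φ(t₀) < 0; if t₀ ∈ (0,∞) is a local maximum point of φ, then φ(t₀) > 0. -/

import Mathlib

open Real Set

set_option maxHeartbeats 1000000 in
/-- If `φ` solves the ODE and both `φ` and `φ'` vanish at some point `s > 0`,
then `φ` vanishes identically on `(0,∞)` (Gronwall-type uniqueness). -/
lemma zero_prop_aux (n : ℕ) (lam q : ℝ) (hq : 1 < q)
    (φ φ' φ'' : ℝ → ℝ)
    (hd1 : ∀ t ∈ Ioi (0:ℝ), HasDerivAt φ (φ' t) t)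
    (hd2 : ∀ t ∈ Ioi (0:ℝ), HasDerivAt φ' (φ'' t) t)
    (hode : ∀ t ∈ Ioi (0:ℝ),
      φ'' t + ((n : ℝ) - 1) * ((exp (2*t) + 1) / (exp (2*t) - 1)) * φ' t
        = lam * φ t - |φ t| ^ (q - 1) * φ t)
    (s : ℝ) (hs : 0 < s) (h0 : φ s = 0) (h0' : φ' s = 0) :
    ∀ t ∈ Ioi (0:ℝ), φ t = 0 := by
  intro τ hτ
  have hτ' : (0:ℝ) < τ := hτ
  set a := min s τ with ha_def
  set b := max s τ with hb_def
  have ha : 0 < a := lt_min hs hτ'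
  have hsub : Icc a b ⊆ Ioi (0:ℝ) := fun t ht => lt_of_lt_of_le ha ht.1
  have hsab : s ∈ Icc a b := ⟨min_le_left _ _, le_max_left _ _⟩
  have hτab : τ ∈ Icc a b := ⟨min_le_right _ _, le_max_right _ _⟩
  -- continuity of φ, φ' on the interval
  have hφc : ContinuousOn φ (Icc a b) :=
    fun t ht => (hd1 t (hsub ht)).continuousAt.continuousWithinAt
  have hφ'c : ContinuousOn φ' (Icc a b) :=
    fun t ht => (hd2 t (hsub ht)).continuousAt.continuousWithinAt
  -- bound for |φ|^(q-1)
  have hPcont : ContinuousOn (fun t => |φ t| ^ (q - 1)) (Icc a b) :=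
    hφc.abs.rpow_const (fun t _ => Or.inr (by linarith))
  obtain ⟨M0, hM0⟩ := isCompact_Icc.exists_bound_of_continuousOn hPcont
  -- bound for the coefficient
  have hccont : ContinuousOn
      (fun t => ((n : ℝ) - 1) * ((exp (2*t) + 1) / (exp (2*t) - 1))) (Icc a b) := by
    apply continuousOn_const.mul
    apply ContinuousOn.div
    · exact ((Real.continuous_exp.comp (continuous_const.mul continuous_id)).add
        continuous_const).continuousOn
    · exact ((Real.continuous_exp.comp (continuous_const.mul continuous_id)).sub
        continuous_const).continuousOn
    · intro t ht
      have ht0 : 0 < t := hsub ht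
      have h1 : (2*t) + 1 ≤ exp (2*t) := Real.add_one_le_exp (2*t)
      have : (1:ℝ) < exp (2*t) := by linarith
      exact ne_of_gt (by linarith)
  obtain ⟨C0, hC0⟩ := isCompact_Icc.exists_bound_of_continuousOn hccont
  set M := max M0 0 with hM_def
  set C := max C0 0 with hC_def
  set K := 1 + |lam| + M + 2*C with hK_def
  -- the energy
  set E : ℝ → ℝ := fun t => φ t * φ t + φ' t * φ' t with hE_def
  have hE : ∀ t ∈ Ioi (0:ℝ),
      HasDerivAt E (2*φ t*φ' t + 2*φ' t*φ'' t) t := by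
    intro t ht
    have h1 := (hd1 t ht).mul (hd1 t ht)
    have h2 := (hd2 t ht).mul (hd2 t ht)
    have := h1.add h2
    exact this.congr_deriv (by ring)
  have hEnn : ∀ t, 0 ≤ E t :=
    fun t => add_nonneg (mul_self_nonneg _) (mul_self_nonneg _)
  -- the key differential inequality
  have hbound : ∀ t ∈ Icc a b, |2*φ t*φ' t + 2*φ' t*φ'' t| ≤ K * E t := by
    intro t ht
    have htI := hsub ht
    have hodet := hode t htI
    set x := φ t with hx_def
    set y := φ' t with hy_def
    set p := |φ t| ^ (q - 1) with hp_def
    set cc := ((n : ℝ) - 1) * ((exp (2*t) + 1) / (exp (2*t) - 1)) with hcc_def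
    have hφ'' : φ'' t = lam * x - p * x - cc * y := by linarith
    have hp0 : 0 ≤ p := Real.rpow_nonneg (abs_nonneg _) _
    have hpM : p ≤ M := by
      have := hM0 t ht
      rw [Real.norm_eq_abs] at this
      calc p ≤ |p| := le_abs_self p
        _ ≤ M0 := this
        _ ≤ M := le_max_left _ _
    have hccC : |cc| ≤ C := by
      have := hC0 t ht
      rw [Real.norm_eq_abs] at this
      exact this.trans (le_max_left _ _)
    have hc1 : cc ≤ C := (le_abs_self cc).trans hccC
    have hc2 : -C ≤ cc := (neg_le_neg hccC).trans (neg_abs_le cc)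
    have hl1 : lam ≤ |lam| := le_abs_self lam
    have hl2 : -|lam| ≤ lam := neg_abs_le lam
    have hE_eq : E t = x * x + y * y := rfl
    rw [hE_eq, hφ'']
    have hnn : 0 ≤ x * x + y * y := add_nonneg (mul_self_nonneg _) (mul_self_nonneg _)
    have hM0' : (0:ℝ) ≤ M := le_max_right _ _
    have hC0' : (0:ℝ) ≤ C := le_max_right _ _
    have k1 : |2*x*y| ≤ x*x + y*y := by
      rw [abs_le]
      constructor
      · nlinarith [sq_nonneg (x + y)]
      · nlinarith [sq_nonneg (x - y)]
    have e : 2*x*y + 2*y*(lam*x - p*x - cc*y)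
        = 2*x*y + lam*(2*x*y) + -(p*(2*x*y)) + -(cc*(2*(y*y))) := by ring
    rw [e]
    have habs : |2*x*y + lam*(2*x*y) + -(p*(2*x*y)) + -(cc*(2*(y*y)))|
        ≤ |2*x*y| + |lam| * |2*x*y| + p * |2*x*y| + |cc| * (2*(y*y)) := by
      have a1 := abs_add_le (2*x*y + lam*(2*x*y) + -(p*(2*x*y))) (-(cc*(2*(y*y))))
      have a2 := abs_add_le (2*x*y + lam*(2*x*y)) (-(p*(2*x*y)))
      have a3 := abs_add_le (2*x*y) (lam*(2*x*y))
      rw [abs_neg, abs_mul cc, abs_of_nonneg (by linarith [mul_self_nonneg y] :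
        (0:ℝ) ≤ 2*(y*y))] at a1
      rw [abs_neg, abs_mul p, abs_of_nonneg hp0] at a2
      rw [abs_mul lam] at a3
      linarith
    have b1 : |lam| * |2*x*y| ≤ |lam| * (x*x+y*y) :=
      mul_le_mul_of_nonneg_left k1 (abs_nonneg lam)
    have b2 : p * |2*x*y| ≤ p*(x*x+y*y) := mul_le_mul_of_nonneg_left k1 hp0
    have b3 : p*(x*x+y*y) ≤ M*(x*x+y*y) := mul_le_mul_of_nonneg_right hpM hnn
    have b4 : |cc| * (2*(y*y)) ≤ C*(2*(y*y)) :=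
      mul_le_mul_of_nonneg_right hccC (by linarith [mul_self_nonneg y])
    have b5 : C*(2*(y*y)) ≤ C*(2*(x*x+y*y)) :=
      mul_le_mul_of_nonneg_left (by nlinarith [mul_self_nonneg x]) hC0'
    have hKexp : K * (x*x+y*y)
        = (x*x+y*y) + |lam| * (x*x+y*y) + M*(x*x+y*y) + C*(2*(x*x+y*y)) := by
      rw [hK_def]; ring
    rw [hKexp]
    calc |2*x*y + lam*(2*x*y) + -(p*(2*x*y)) + -(cc*(2*(y*y)))|
        ≤ |2*x*y| + |lam| * |2*x*y| + p * |2*x*y| + |cc| * (2*(y*y)) := habs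
      _ ≤ (x*x+y*y) + |lam| * (x*x+y*y) + M*(x*x+y*y) + C*(2*(x*x+y*y)) := by linarith
  have hEs : E s = 0 := by simp only [hE_def, h0, h0']; ring
  rcases le_total s τ with hcase | hcase
  · -- forward: G = E * exp (-K t) is antitone
    set G : ℝ → ℝ := fun t => E t * exp (-K * t) with hG_def
    have hGd : ∀ t ∈ Ioi (0:ℝ), HasDerivAt G
        ((2*φ t*φ' t + 2*φ' t*φ'' t) * exp (-K*t) + E t * (exp (-K*t) * (-K))) t := by
      intro t ht
      have hx : HasDerivAt (fun u => exp (-K * u)) (exp (-K*t) * (-K)) t := by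
        simpa using ((hasDerivAt_id t).const_mul (-K)).exp
      exact (hE t ht).mul hx
    have hGanti : AntitoneOn G (Icc a b) := by
      apply antitoneOn_of_deriv_nonpos (convex_Icc a b)
      · exact fun t ht => (hGd t (hsub ht)).continuousAt.continuousWithinAt
      · intro t ht
        rw [interior_Icc] at ht
        exact (hGd t (hsub (Ioo_subset_Icc_self ht))).differentiableAt.differentiableWithinAt
      · intro t ht
        rw [interior_Icc] at ht
        have ht' : t ∈ Icc a b := Ioo_subset_Icc_self ht
        rw [(hGd t (hsub ht')).deriv]
        have h1 : 2*φ t*φ' t + 2*φ' t*φ'' t ≤ K * E t :=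
          (abs_le.mp (hbound t ht')).2
        have he : 0 < exp (-K*t) := exp_pos _
        nlinarith [mul_nonneg (sub_nonneg.2 h1) he.le]
    have h1 : G τ ≤ G s := hGanti hsab hτab hcase
    have hEτ : E τ = 0 := by
      simp only [hG_def] at h1
      rw [hEs, zero_mul] at h1
      exact le_antisymm (by nlinarith [exp_pos (-K*τ), hEnn τ]) (hEnn τ)
    have hx : φ τ * φ τ = 0 := by
      have := hEτ
      simp only [hE_def] at this
      nlinarith [mul_self_nonneg (φ τ), mul_self_nonneg (φ' τ)]
    exact mul_self_eq_zero.mp hx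
  · -- backward: H = E * exp (K t) is monotone
    set G : ℝ → ℝ := fun t => E t * exp (K * t) with hG_def
    have hGd : ∀ t ∈ Ioi (0:ℝ), HasDerivAt G
        ((2*φ t*φ' t + 2*φ' t*φ'' t) * exp (K*t) + E t * (exp (K*t) * K)) t := by
      intro t ht
      have hx : HasDerivAt (fun u => exp (K * u)) (exp (K*t) * K) t := by
        simpa using ((hasDerivAt_id t).const_mul K).exp
      exact (hE t ht).mul hx
    have hGmono : MonotoneOn G (Icc a b) := by
      apply monotoneOn_of_deriv_nonneg (convex_Icc a b)
      · exact fun t ht => (hGd t (hsub ht)).continuousAt.continuousWithinAt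
      · intro t ht
        rw [interior_Icc] at ht
        exact (hGd t (hsub (Ioo_subset_Icc_self ht))).differentiableAt.differentiableWithinAt
      · intro t ht
        rw [interior_Icc] at ht
        have ht' : t ∈ Icc a b := Ioo_subset_Icc_self ht
        rw [(hGd t (hsub ht')).deriv]
        have h1 : -(K * E t) ≤ 2*φ t*φ' t + 2*φ' t*φ'' t :=
          (abs_le.mp (hbound t ht')).1
        have he : 0 < exp (K*t) := exp_pos _
        nlinarith [mul_nonneg (by linarith : (0:ℝ) ≤ 2*φ t*φ' t + 2*φ' t*φ'' t + K * E t) he.le]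
    have h1 : G τ ≤ G s := hGmono hτab hsab hcase
    have hEτ : E τ = 0 := by
      simp only [hG_def] at h1
      rw [hEs, zero_mul] at h1
      exact le_antisymm (by nlinarith [exp_pos (K*τ), hEnn τ]) (hEnn τ)
    have hx : φ τ * φ τ = 0 := by
      have := hEτ
      simp only [hE_def] at this
      nlinarith [mul_self_nonneg (φ τ), mul_self_nonneg (φ' τ)]
    exact mul_self_eq_zero.mp hx

/-- At a local minimum of a nontrivial solution, φ is negative. -/
lemma local_min_neg_aux (n : ℕ) (lam q : ℝ) (hq : 1 < q) (hlam : lam ≤ 0)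
    (φ φ' φ'' : ℝ → ℝ)
    (hd1 : ∀ t ∈ Ioi (0:ℝ), HasDerivAt φ (φ' t) t)
    (hd2 : ∀ t ∈ Ioi (0:ℝ), HasDerivAt φ' (φ'' t) t)
    (hode : ∀ t ∈ Ioi (0:ℝ),
      φ'' t + ((n : ℝ) - 1) * ((exp (2*t) + 1) / (exp (2*t) - 1)) * φ' t
        = lam * φ t - |φ t| ^ (q - 1) * φ t)
    (hnontriv : ¬ (∀ t ∈ Ioi (0:ℝ), φ t = 0))
    (t₀ : ℝ) (ht₀ : 0 < t₀) (hm : IsLocalMin φ t₀) : φ t₀ < 0 := by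
  have hz : φ' t₀ = 0 := hm.hasDerivAt_eq_zero (hd1 t₀ ht₀)
  by_contra hcon
  push_neg at hcon
  rcases eq_or_lt_of_le hcon with heq | hpos
  · -- φ t₀ = 0: zero propagation contradicts nontriviality
    exact hnontriv (zero_prop_aux n lam q hq φ φ' φ'' hd1 hd2 hode t₀ ht₀ heq.symm hz)
  · -- φ t₀ > 0: second derivative is negative, contradicting local min
    have hodet := hode t₀ ht₀
    rw [hz] at hodet
    have hP : 0 < |φ t₀| ^ (q - 1) :=
      Real.rpow_pos_of_pos (abs_pos.mpr (ne_of_gt hpos)) _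
    have hpp : φ'' t₀ < 0 := by
      have h1 : 0 < |φ t₀| ^ (q - 1) * φ t₀ := mul_pos hP hpos
      have h2 : lam * φ t₀ ≤ 0 := mul_nonpos_of_nonpos_of_nonneg hlam hpos.le
      nlinarith
    -- eventually φ' < 0 to the right of t₀
    have hslope : Filter.Tendsto (slope φ' t₀) (nhdsWithin t₀ {t₀}ᶜ) (nhds (φ'' t₀)) :=
      hasDerivAt_iff_tendsto_slope.mp (hd2 t₀ ht₀)
    have h1 : ∀ᶠ t in nhdsWithin t₀ {t₀}ᶜ, slope φ' t₀ t < 0 :=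
      hslope.eventually (Filter.Tendsto.eventually_lt_const hpp Filter.tendsto_id)
    have hmono : nhdsWithin t₀ (Ioi t₀) ≤ nhdsWithin t₀ {t₀}ᶜ :=
      nhdsWithin_mono t₀ (fun x hx => ne_of_gt hx)
    have h1' : ∀ᶠ t in nhdsWithin t₀ (Ioi t₀), slope φ' t₀ t < 0 := h1.filter_mono hmono
    have hev : ∀ᶠ t in nhdsWithin t₀ (Ioi t₀), φ' t < 0 := by
      filter_upwards [h1', eventually_mem_nhdsWithin] with t hts htmem
      rw [slope_def_field, hz, sub_zero] at hts
      by_contra h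
      push_neg at h
      have := div_nonneg h (sub_pos.2 htmem).le
      linarith
    have hminev : ∀ᶠ t in nhdsWithin t₀ (Ioi t₀), φ t₀ ≤ φ t :=
      hm.filter_mono nhdsWithin_le_nhds
    have hall : ∀ᶠ t in nhdsWithin t₀ (Ioi t₀), φ' t < 0 ∧ φ t₀ ≤ φ t := hev.and hminev
    obtain ⟨u, hu, hsub2⟩ := mem_nhdsGT_iff_exists_Ioc_subset.mp hall
    have hu' : t₀ < u := hu
    have hanti : StrictAntiOn φ (Icc t₀ u) := by
      apply strictAntiOn_of_deriv_neg (convex_Icc t₀ u)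
      · intro t ht
        exact (hd1 t (lt_of_lt_of_le ht₀ ht.1)).continuousAt.continuousWithinAt
      · intro t ht
        rw [interior_Icc] at ht
        rw [(hd1 t (ht₀.trans ht.1)).deriv]
        exact (hsub2 ⟨ht.1, ht.2.le⟩).1
    have hlt : φ u < φ t₀ :=
      hanti (left_mem_Icc.2 hu'.le) (right_mem_Icc.2 hu'.le) hu'
    have hle : φ t₀ ≤ φ u := (hsub2 ⟨hu', le_refl u⟩).2
    linarith

/-- For λ ≤ 0 and a not-identically-zero solution φ of EQ_{λ,n,q} on (0,∞):
at a local minimum point t₀ > 0 one has φ(t₀) < 0, and at a local maximum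
point t₀ > 0 one has φ(t₀) > 0. -/
theorem local_extrema_sign_nonpositive_lambda
    (n : ℕ) (hn : 2 ≤ n) (lam q : ℝ) (hq : 1 < q) (hlam : lam ≤ 0)
    (φ φ' φ'' : ℝ → ℝ)
    (hd1 : ∀ t ∈ Ioi (0:ℝ), HasDerivAt φ (φ' t) t)
    (hd2 : ∀ t ∈ Ioi (0:ℝ), HasDerivAt φ' (φ'' t) t)
    (hode : ∀ t ∈ Ioi (0:ℝ),
      φ'' t + ((n : ℝ) - 1) * ((exp (2*t) + 1) / (exp (2*t) - 1)) * φ' t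
        = lam * φ t - |φ t| ^ (q - 1) * φ t)
    (hnontriv : ¬ (∀ t ∈ Ioi (0:ℝ), φ t = 0))
    (t₀ : ℝ) (ht₀ : 0 < t₀) :
    (IsLocalMin φ t₀ → φ t₀ < 0) ∧ (IsLocalMax φ t₀ → 0 < φ t₀) := by
  constructor
  · intro hm
    exact local_min_neg_aux n lam q hq hlam φ φ' φ'' hd1 hd2 hode hnontriv t₀ ht₀ hm
  · intro hm
    have hd1' : ∀ t ∈ Ioi (0:ℝ), HasDerivAt (fun t => -φ t) (-φ' t) t :=
      fun t ht => (hd1 t ht).neg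
    have hd2' : ∀ t ∈ Ioi (0:ℝ), HasDerivAt (fun t => -φ' t) (-φ'' t) t :=
      fun t ht => (hd2 t ht).neg
    have hode' : ∀ t ∈ Ioi (0:ℝ),
        (fun t => -φ'' t) t + ((n : ℝ) - 1) * ((exp (2*t) + 1) / (exp (2*t) - 1)) * (fun t => -φ' t) t
          = lam * (fun t => -φ t) t - |(fun t => -φ t) t| ^ (q - 1) * (fun t => -φ t) t := by
      intro t ht
      have := hode t ht
      simp only [abs_neg]
      ring_nf
      ring_nf at this
      linarith
    have hnontriv' : ¬ (∀ t ∈ Ioi (0:ℝ), (fun t => -φ t) t = 0) := by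
      intro h
      exact hnontriv (fun t ht => by have := h t ht; simpa using this)
    have := local_min_neg_aux n lam q hq hlam (fun t => -φ t) (fun t => -φ' t)
      (fun t => -φ'' t) hd1' hd2' hode' hnontriv' t₀ ht₀ hm.neg
    simpa using this
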